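/- Let p̌ ∈ (0,1), let σ > 0, and let G_1, G_2, … be i.i.d. real random variables with mean μ = E[G_t] > 0 such that G_t − μ is σ²-sub-Gaussian. Let τ = min{s ≥ 3 : |(1/s) Σ_{t=1}^s G_t| > √((5σ²/s)·log(6·log(s)/√p̌))} be the termination time of the sequential test. Then for every integer n ≥ 3 satisfying √((5σ²/n)·log(6·log(n)/√p̌)) ≤ μ/2, one has P(τ > n) ≤ exp(−nμ²/(8σ²)). -/

import Mathlib

open MeasureTheory ProbabilityTheory Real

/-- **Tail bound for the termination time of the sub-Gaussian sequential test.**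
If `G 1, G 2, …` are i.i.d. with mean `m > 0` and `G t − m` is `σ²`-sub-Gaussian, and
`τ` is the first `s ≥ 3` at which the sample mean exits the confidence band of radius
`√((5σ²/s)·log(6·log s/√p̌))`, then for every `n ≥ 3` at which the radius is at most
`m/2`, one has `P(τ > n) ≤ exp(−n m²/(8σ²))`. -/
theorem subgaussian_sequential_test_tail_bound
    {Ω : Type*} [MeasurableSpace Ω] (P : Measure Ω) [IsProbabilityMeasure P]
    (pc σ m : ℝ) (hpc : 0 < pc) (hpc1 : pc < 1) (hσ : 0 < σ) (hm : 0 < m)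
    (G : ℕ → Ω → ℝ)
    (hmeas : ∀ t, Measurable (G t))
    (hint : ∀ t, Integrable (G t) P)
    (hindep : iIndepFun G P)
    (hident : ∀ t, Measure.map (G t) P = Measure.map (G 0) P)
    (hmean : ∀ t, ∫ ω, G t ω ∂P = m)
    (hsubG : ∀ t, ∀ l : ℝ,
      ∫⁻ ω, ENNReal.ofReal (Real.exp (l * (G t ω - m))) ∂P ≤
        ENNReal.ofReal (Real.exp (l^2 * σ^2 / 2)))
    (τ : Ω → ℕ∞)
    (hτ : ∀ ω, τ ω = sInf {s : ℕ∞ | ∃ k : ℕ, s = (k : ℕ∞) ∧ 3 ≤ k ∧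
      Real.sqrt (5 * σ^2 / k * Real.log (6 * Real.log k / Real.sqrt pc)) <
        |(1 / (k:ℝ)) * ∑ t ∈ Finset.Icc 1 k, G t ω|}) :
    ∀ n : ℕ, 3 ≤ n →
      Real.sqrt (5 * σ^2 / n * Real.log (6 * Real.log n / Real.sqrt pc)) ≤ m / 2 →
      P {ω | (n : ℕ∞) < τ ω} ≤ ENNReal.ofReal (Real.exp (-(n * m^2) / (8 * σ^2))) := by
  intro n hn3 hrad
  classical
  have hσ2 : (0:ℝ) < σ^2 := by positivity
  have hn0 : (0:ℝ) < (n:ℝ) :=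
    Nat.cast_pos.mpr (lt_of_lt_of_le (by norm_num) hn3)
  set X : ℕ → Ω → ℝ := fun t ω => G t ω - m with hX
  have hXmeas : ∀ t, Measurable (X t) := fun t => (hmeas t).sub measurable_const
  have hXindep : iIndepFun X P :=
    hindep.comp (fun _ x => x - m) (fun _ => measurable_id.sub measurable_const)
  have hintexp : ∀ (l : ℝ) (t : ℕ), Integrable (fun ω => exp (l * X t ω)) P := by
    intro l t
    refine ⟨(((hXmeas t).const_mul l).exp).aestronglyMeasurable, ?_⟩
    rw [hasFiniteIntegral_iff_ofReal (ae_of_all _ fun ω => (exp_pos _).le)]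
    exact lt_of_le_of_lt (hsubG t l) ENNReal.ofReal_lt_top
  have hmgf : ∀ (l : ℝ) (t : ℕ), mgf (X t) P l ≤ exp (l^2 * σ^2 / 2) := by
    intro l t
    rw [mgf, integral_eq_lintegral_of_nonneg_ae (ae_of_all _ fun ω => (exp_pos _).le)
      (((hXmeas t).const_mul l).exp).aestronglyMeasurable]
    calc (∫⁻ ω, ENNReal.ofReal (exp (l * X t ω)) ∂P).toReal
        ≤ (ENNReal.ofReal (exp (l^2 * σ^2 / 2))).toReal :=
          ENNReal.toReal_mono ENNReal.ofReal_ne_top (hsubG t l)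
      _ = exp (l^2 * σ^2 / 2) := ENNReal.toReal_ofReal (exp_pos _).le
  set l : ℝ := -(m / (2 * σ^2)) with hl
  have hl_neg : l ≤ 0 := by
    rw [hl, neg_nonpos]; positivity
  have hsumint : Integrable (fun ω => exp (l * (∑ t ∈ Finset.Icc 1 n, X t) ω)) P :=
    hXindep.integrable_exp_mul_sum hXmeas (fun i _ => hintexp l i)
  have hcard : (Finset.Icc 1 n).card = n := by
    rw [Nat.card_Icc]; omega
  have hmgfsum : mgf (∑ t ∈ Finset.Icc 1 n, X t) P l ≤ exp (l^2 * σ^2 / 2) ^ n := by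
    rw [hXindep.mgf_sum hXmeas]
    calc ∏ t ∈ Finset.Icc 1 n, mgf (X t) P l
        ≤ ∏ _t ∈ Finset.Icc 1 n, exp (l^2 * σ^2 / 2) :=
          Finset.prod_le_prod (fun t _ => mgf_nonneg) (fun t _ => hmgf l t)
      _ = exp (l^2 * σ^2 / 2) ^ n := by rw [Finset.prod_const, hcard]
  have hcher := measure_le_le_exp_mul_mgf (μ := P)
    (X := ∑ t ∈ Finset.Icc 1 n, X t) (-((n:ℝ) * m / 2)) hl_neg hsumint
  have hbound : (P {ω | (∑ t ∈ Finset.Icc 1 n, X t) ω ≤ -((n:ℝ) * m / 2)}).toReal ≤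
      exp (-((n:ℝ) * m^2) / (8 * σ^2)) := by
    refine hcher.trans ?_
    have h1 : exp (-l * -((n:ℝ) * m / 2)) * mgf (∑ t ∈ Finset.Icc 1 n, X t) P l ≤
        exp (-l * -((n:ℝ) * m / 2)) * exp (l^2 * σ^2 / 2) ^ n := by
      gcongr
    refine h1.trans (le_of_eq ?_)
    rw [← Real.exp_nat_mul, ← Real.exp_add]
    congr 1
    rw [hl]
    field_simp
    ring
  have hsub : {ω | (n : ℕ∞) < τ ω} ⊆
      {ω | (∑ t ∈ Finset.Icc 1 n, X t) ω ≤ -((n:ℝ) * m / 2)} := by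
    intro ω hω
    simp only [Set.mem_setOf_eq] at hω ⊢
    have hnotmem : ¬ Real.sqrt (5 * σ^2 / n * Real.log (6 * Real.log n / Real.sqrt pc)) <
        |(1 / (n:ℝ)) * ∑ t ∈ Finset.Icc 1 n, G t ω| := by
      intro habs
      have hmem : (n : ℕ∞) ∈ {s : ℕ∞ | ∃ k : ℕ, s = (k : ℕ∞) ∧ 3 ≤ k ∧
          Real.sqrt (5 * σ^2 / k * Real.log (6 * Real.log k / Real.sqrt pc)) <
            |(1 / (k:ℝ)) * ∑ t ∈ Finset.Icc 1 k, G t ω|} := ⟨n, rfl, hn3, habs⟩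
      have : τ ω ≤ (n : ℕ∞) := by rw [hτ ω]; exact sInf_le hmem
      exact absurd hω (not_lt.mpr this)
    have habs : |(1 / (n:ℝ)) * ∑ t ∈ Finset.Icc 1 n, G t ω| ≤ m / 2 :=
      le_trans (not_lt.mp hnotmem) hrad
    have hmean2 : (1 / (n:ℝ)) * ∑ t ∈ Finset.Icc 1 n, G t ω ≤ m / 2 :=
      le_trans (le_abs_self _) habs
    have hsumG : ∑ t ∈ Finset.Icc 1 n, G t ω ≤ (n:ℝ) * (m / 2) := by
      rw [one_div, inv_mul_le_iff₀ hn0] at hmean2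
      linarith
    have hSeq : (∑ t ∈ Finset.Icc 1 n, X t) ω =
        (∑ t ∈ Finset.Icc 1 n, G t ω) - (n:ℝ) * m := by
      simp only [Finset.sum_apply, hX, Finset.sum_sub_distrib, Finset.sum_const, hcard,
        nsmul_eq_mul]
    rw [hSeq]
    linarith
  calc P {ω | (n : ℕ∞) < τ ω}
      ≤ P {ω | (∑ t ∈ Finset.Icc 1 n, X t) ω ≤ -((n:ℝ) * m / 2)} := measure_mono hsub
    _ = ENNReal.ofReal
        (P {ω | (∑ t ∈ Finset.Icc 1 n, X t) ω ≤ -((n:ℝ) * m / 2)}).toReal := by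
        rw [ENNReal.ofReal_toReal (measure_ne_top _ _)]
    _ ≤ ENNReal.ofReal (exp (-((n:ℝ) * m^2) / (8 * σ^2))) :=
        ENNReal.ofReal_le_ofReal hbound
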